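/- For every positive integer k, the quadratic polynomial f(j) = j^2 - 3kj - (3k - 3) has no integer root j with 0 < j < 3k. -/
import Mathlib

theorem stmt_4 (k j : ℤ) (hk : 0 < k) (hj : 0 < j) (hj' : j < 3*k) :
    j^2 - 3*k*j - (3*k - 3) ≠ 0 := by
  intro h
  nlinarith [mul_pos hj (show (0:ℤ) < 3*k - j by linarith)]
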